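/- Fix integers n ≥ 1 and 0 ≤ k ≤ n−1, a strictly decreasing function X₀ : {1,…,n} → ℤ, and let h : {0,…,k} × ℤ → ℝ be the unique function satisfying: (i) 2·h(l, z−1) − h(l, z) = h(l+1, z) for all 0 ≤ l < k and z ∈ ℤ; (ii) h(k, z) = 2^{z − X₀(n−k)} for all z ∈ ℤ; (iii) h(l, X₀(n−l)) = 0 for all 0 ≤ l < k. Then there exists a polynomial P with real coefficients of degree at most k such that h(0, x) = 2^{x}·P(x) for all x ∈ ℤ. -/

import Mathlib

open Polynomial

lemma withbot_le_of_lt_succ {m : ℕ} {x : WithBot ℕ} (hx : x < ((m+1 : ℕ) : WithBot ℕ)) :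
    x ≤ (m : ℕ) := by
  cases x with
  | bot => exact bot_le
  | coe a =>
    rw [Nat.cast_withBot] at hx ⊢
    have : a < m + 1 := by exact_mod_cast hx
    exact_mod_cast Nat.lt_succ_iff.mp this

lemma antidiff : ∀ (N : ℕ) (Q : Polynomial ℝ), Q.natDegree ≤ N →
    ∃ P : Polynomial ℝ, P.degree ≤ Q.degree + 1 ∧
      ∀ x : ℝ, P.eval (x - 1) - P.eval x = Q.eval x := by
  intro N
  induction N with
  | zero =>
    intro Q hQ
    rcases eq_or_ne Q 0 with rfl | hQ0
    · exact ⟨0, by simp, by simp⟩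
    · have hd : Q.natDegree = 0 := le_antisymm hQ (Nat.zero_le _)
      obtain ⟨c, rfl⟩ := Polynomial.natDegree_eq_zero.mp hd
      have hc : c ≠ 0 := fun hc => hQ0 (by simp [hc])
      refine ⟨C (-c) * X, ?_, ?_⟩
      · rw [Polynomial.degree_C hc]
        simpa using Polynomial.degree_C_mul_X_le (-c)
      · intro x; simp; ring
  | succ N ih =>
    intro Q hQ
    rcases le_or_gt Q.natDegree N with hle | hlt
    · exact ih Q hle
    · have hd : Q.natDegree = N + 1 := le_antisymm hQ hlt
      have hQ0 : Q ≠ 0 := fun h => by simp [h] at hd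
      set c := Q.leadingCoeff with hc
      have hc0 : c ≠ 0 := Polynomial.leadingCoeff_ne_zero.mpr hQ0
      set a : ℝ := -c / ((N : ℝ) + 2) with ha
      set D : Polynomial ℝ := (X - C 1) ^ (N + 2) - X ^ (N + 2) with hD
      have hmon : ((X : Polynomial ℝ) - C 1) ^ (N + 2) ≠ 0 :=
        ((monic_X_sub_C (1:ℝ)).pow _).ne_zero
      have hdeg1 : (((X : Polynomial ℝ) - C 1) ^ (N + 2)).degree = ((N + 2 : ℕ) : WithBot ℕ) := by
        rw [Polynomial.degree_pow, Polynomial.degree_X_sub_C]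
        simp
      have hDlt : D.degree < ((N + 2 : ℕ) : WithBot ℕ) := by
        have := Polynomial.degree_sub_lt (p := ((X : Polynomial ℝ) - C 1) ^ (N + 2))
          (q := X ^ (N + 2)) ?_ hmon ?_
        · rw [hdeg1] at this; exact this
        · rw [hdeg1, Polynomial.degree_X_pow]
        · rw [((monic_X_sub_C (1:ℝ)).pow _).leadingCoeff, (monic_X_pow _).leadingCoeff]
      have hDdeg : D.degree ≤ ((N + 1 : ℕ) : WithBot ℕ) := withbot_le_of_lt_succ hDlt
      have hXC : (X : Polynomial ℝ) - C 1 = X + C (-1) := by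
        rw [map_neg, ← sub_eq_add_neg]
      have hDcoeff : D.coeff (N + 1) = -((N : ℝ) + 2) := by
        rw [hD, Polynomial.coeff_sub]
        have h1 : (((X : Polynomial ℝ) - C 1) ^ (N + 2)).coeff (N + 1) = -((N : ℝ) + 2) := by
          rw [hXC, Polynomial.coeff_X_add_C_pow]
          have h2 : N + 2 - (N + 1) = 1 := by omega
          rw [h2, pow_one, Nat.choose_succ_self_right]
          push_cast; ring
        rw [h1, Polynomial.coeff_X_pow]
        simp
      set R : Polynomial ℝ := Q - C a * D with hR
      have hN2 : ((N : ℝ) + 2) ≠ 0 := by positivity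
      have hRcoeff : R.coeff (N + 1) = 0 := by
        rw [hR, Polynomial.coeff_sub, Polynomial.coeff_C_mul, hDcoeff]
        have : Q.coeff (N + 1) = c := by rw [hc, Polynomial.leadingCoeff, hd]
        rw [this, ha]
        field_simp
        ring
      have hCD : (C a * D).degree ≤ ((N + 1 : ℕ) : WithBot ℕ) := by
        refine (Polynomial.degree_mul_le _ _).trans ?_
        calc (C a).degree + D.degree ≤ 0 + ((N + 1 : ℕ) : WithBot ℕ) :=
              add_le_add Polynomial.degree_C_le hDdeg
          _ = _ := zero_add _
      have hRdeg : R.degree ≤ ((N + 1 : ℕ) : WithBot ℕ) := by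
        rw [hR]
        refine (Polynomial.degree_sub_le _ _).trans (max_le ?_ ?_)
        · rw [← hd]; exact Polynomial.degree_le_natDegree
        · exact hCD
      have hRlt : R.degree < ((N + 1 : ℕ) : WithBot ℕ) := by
        rcases lt_or_eq_of_le hRdeg with h | h
        · exact h
        · exfalso
          have h0 : R ≠ 0 := by
            intro h0
            rw [h0, Polynomial.degree_zero] at h
            exact absurd h.symm (by rw [Nat.cast_withBot]; exact WithBot.coe_ne_bot)
          have hnd : R.natDegree = N + 1 := by
            have h2 := (Polynomial.degree_eq_natDegree h0).symm.trans h
            exact_mod_cast h2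
          have h3 := Polynomial.leadingCoeff_ne_zero.mpr h0
          rw [Polynomial.leadingCoeff, hnd] at h3
          exact h3 hRcoeff
      have hRnat : R.natDegree ≤ N :=
        Polynomial.natDegree_le_iff_degree_le.mpr (withbot_le_of_lt_succ hRlt)
      obtain ⟨P₁, hP₁deg, hP₁⟩ := ih R hRnat
      refine ⟨C a * X ^ (N + 2) + P₁, ?_, ?_⟩
      · have hQdeg : Q.degree = ((N + 1 : ℕ) : WithBot ℕ) := by
          rw [Polynomial.degree_eq_natDegree hQ0, hd]
        rw [hQdeg]
        have hcast : ((N + 1 : ℕ) : WithBot ℕ) + 1 = ((N + 2 : ℕ) : WithBot ℕ) := by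
          push_cast; ring
        rw [hcast]
        refine (Polynomial.degree_add_le _ _).trans (max_le ?_ ?_)
        · exact_mod_cast Polynomial.degree_C_mul_X_pow_le (N + 2) a
        · refine hP₁deg.trans ?_
          have hRN : R.degree ≤ ((N : ℕ) : WithBot ℕ) :=
            Polynomial.degree_le_natDegree.trans (by exact_mod_cast hRnat)
          calc R.degree + 1 ≤ ((N : ℕ) : WithBot ℕ) + 1 := add_le_add_left hRN 1
            _ = ((N + 1 : ℕ) : WithBot ℕ) := by push_cast; ring
            _ ≤ ((N + 2 : ℕ) : WithBot ℕ) := by exact_mod_cast WithBot.coe_le_coe.mpr (by omega)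
      · intro x
        have hRev : R.eval x = Q.eval x - a * D.eval x := by
          rw [hR]; simp
        have hDev : D.eval x = (x - 1) ^ (N + 2) - x ^ (N + 2) := by
          rw [hD]; simp
        have := hP₁ x
        simp only [Polynomial.eval_add, Polynomial.eval_mul, Polynomial.eval_C,
          Polynomial.eval_pow, Polynomial.eval_X]
        rw [hRev, hDev] at this
        linarith [this]

/-- If `h = h^n_k` solves the initial–boundary value problem
(i) `2·h(l, z−1) − h(l, z) = h(l+1, z)` for `0 ≤ l < k`;
(ii) `h(k, z) = 2^{z − X₀(n−k)}`;
(iii) `h(l, X₀(n−l)) = 0` for `0 ≤ l < k`;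
then `2^{-x} h(0, x)` is (the restriction to `ℤ` of) a real polynomial of degree
at most `k`. -/
theorem statement14 (n k : ℕ) (hn : 1 ≤ n) (hk : k ≤ n - 1) (X₀ : ℕ → ℤ)
    (hX : ∀ i j : ℕ, 1 ≤ i → i < j → j ≤ n → X₀ j < X₀ i)
    (h : ℕ → ℤ → ℝ)
    (hheat : ∀ l, l < k → ∀ z : ℤ, 2 * h l (z - 1) - h l z = h (l + 1) z)
    (hinit : ∀ z : ℤ, h k z = (2 : ℝ) ^ (z - X₀ (n - k)))
    (hbdry : ∀ l, l < k → h l (X₀ (n - l)) = 0) :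
    ∃ P : Polynomial ℝ, P.degree ≤ k ∧
      ∀ x : ℤ, h 0 x = (2 : ℝ) ^ x * P.eval (x : ℝ) := by
  have key : ∀ j, j ≤ k → ∃ P : Polynomial ℝ, P.degree ≤ (j : ℕ) ∧
      ∀ x : ℤ, h (k - j) x = (2 : ℝ) ^ x * P.eval (x : ℝ) := by
    intro j
    induction j with
    | zero =>
      intro _
      refine ⟨Polynomial.C ((2:ℝ) ^ (-X₀ (n - k))), by simpa using Polynomial.degree_C_le, ?_⟩
      intro x
      rw [Nat.sub_zero, hinit x, Polynomial.eval_C,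
        ← zpow_add₀ (two_ne_zero) x (-X₀ (n - k))]
      ring_nf
    | succ j ih =>
      intro hj
      obtain ⟨Q, hQdeg, hQ⟩ := ih (Nat.le_of_succ_le hj)
      set l := k - (j + 1) with hldef
      have hl : l < k := by omega
      have hl1 : l + 1 = k - j := by omega
      obtain ⟨P₀, hP₀deg, hP₀⟩ := antidiff Q.natDegree Q le_rfl
      set z₀ : ℤ := X₀ (n - l) with hz₀def
      set P : Polynomial ℝ := P₀ - Polynomial.C (P₀.eval (z₀ : ℝ)) with hPdef
      have hΔ : ∀ x : ℝ, P.eval (x - 1) - P.eval x = Q.eval x := by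
        intro x
        simp only [hPdef, Polynomial.eval_sub, Polynomial.eval_C]
        have := hP₀ x
        linarith
      have hdeg : P.degree ≤ ((j + 1 : ℕ) : WithBot ℕ) := by
        rw [hPdef]
        refine (Polynomial.degree_sub_le _ _).trans (max_le ?_ ?_)
        · refine hP₀deg.trans ?_
          calc Q.degree + 1 ≤ ((j : ℕ) : WithBot ℕ) + 1 := add_le_add_left hQdeg 1
            _ = ((j + 1 : ℕ) : WithBot ℕ) := by push_cast; ring
        · exact Polynomial.degree_C_le.trans (by exact_mod_cast bot_le.trans_eq rfl)
      refine ⟨P, hdeg, ?_⟩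
      set d : ℤ → ℝ := fun z => h l z - (2:ℝ) ^ z * P.eval (z : ℝ) with hddef
      have hrec : ∀ z : ℤ, d z = 2 * d (z - 1) := by
        intro z
        have h1 : 2 * h l (z - 1) - h l z = h (l + 1) z := hheat l hl z
        have h2 : h (l + 1) z = (2:ℝ) ^ z * Q.eval (z : ℝ) := by rw [hl1]; exact hQ z
        have h3 : (2:ℝ) ^ z = 2 * (2:ℝ) ^ (z - 1) := by
          have h3' := zpow_add_one₀ (two_ne_zero : (2:ℝ) ≠ 0) (z - 1)
          rw [sub_add_cancel] at h3'
          rw [h3']; ring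
        have h4 := hΔ (z : ℝ)
        have h5 : ((z - 1 : ℤ) : ℝ) = (z : ℝ) - 1 := by push_cast; ring
        simp only [hddef, h5]
        rw [h2, h3] at h1
        rw [h3]
        linear_combination -h1 + 2 * (2:ℝ) ^ (z - 1) * h4
      have hz₀ : d z₀ = 0 := by
        have hb := hbdry l hl
        simp only [hddef, hPdef, Polynomial.eval_sub, Polynomial.eval_C, ← hz₀def]
        rw [← hz₀def] at hb
        rw [hb]
        ring
      have hall : ∀ m : ℤ, d (z₀ + m) = 0 := by
        intro m
        induction m using Int.induction_on with
        | zero => simpa using hz₀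
        | succ i hi =>
          have h6 := hrec (z₀ + (i + 1))
          rw [show z₀ + ((i : ℤ) + 1) - 1 = z₀ + i by ring] at h6
          rw [h6, hi]; ring
        | pred i hi =>
          have h6 := hrec (z₀ + (-(i : ℤ)))
          rw [show z₀ + (-(i : ℤ)) - 1 = z₀ + (-(i : ℤ) - 1) by ring] at h6
          rw [hi] at h6
          have : d (z₀ + (-(i : ℤ) - 1)) = 0 := by linarith
          simpa [sub_eq_add_neg, add_comm] using this
      intro x
      have h7 := hall (x - z₀)
      rw [show z₀ + (x - z₀) = x by ring] at h7
      have : h l x - (2:ℝ) ^ x * P.eval (x : ℝ) = 0 := h7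
      linarith
  obtain ⟨P, hdeg, hP⟩ := key k le_rfl
  exact ⟨P, hdeg, by simpa using hP⟩
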